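/- Let A ∈ ℝ^{n×n}, B ∈ ℝ^{n×p}, let u : ℝ → ℝ^p be a function, and let x : ℝ → ℝ^n be differentiable with ẋ(t) = A x(t) + B u(t) for all t ∈ ℝ. Set N := n(n+1)/2, x^{[2]}(t) := D_nᵀ (x(t) ⊗ x(t)), Ā := D_nᵀ (A ⊕ A) (D_n⁺)ᵀ, and Ū(t) := D_nᵀ ((B u(t)) ⊗ I_n + I_n ⊗ (B u(t))). Fix k ∈ ℕ, sizes p_0, …, p_{k+1} ∈ ℕ, matrices L̄_i ∈ ℝ^{p_i × N} for i = 0, …, k+1, permutation matrices P_i ∈ ℝ^{p_i × p_i} for i = 0, …, k+1, and matrices M_i^{(k)} ∈ ℝ^{(p_k − p_{k+1}) × p_i} for i = 0, …, k (with p_{k+1} ≤ p_k). Assume P_k L̄_k Ā = [L̄_{k+1}; Σ_{i=0}^{k} M_i^{(k)} P_i L̄_i], where [·;·] denotes vertical stacking of a p_{k+1}×N block over a (p_k − p_{k+1})×N block. Define ξ_i(t) := L̄_i x^{[2]}(t). Then, for every t, d/dt (P_k ξ_k(t)) = Σ_{i=0}^{k} [0_{p_{k+1}×p_i}; M_i^{(k)}]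 P_i ξ_i(t) + [P_{k+1}ᵀ; 0_{(p_k−p_{k+1})×p_{k+1}}] P_{k+1} ξ_{k+1}(t) + P_k L̄_k Ū(t) x(t). -/

import Mathlib

open Matrix
open scoped Kronecker

namespace Quad

/-- Index set for the lower-triangular entries (pairs `(i,j)` with `j ≤ i`). -/
abbrev SymIdx (n : ℕ) := {p : Fin n × Fin n // p.2 ≤ p.1}

/-- Vectorization of a matrix (stacking columns): `vec M (j, i) = M i j`. -/
def vec {n m : ℕ} (M : Matrix (Fin n) (Fin m) ℝ) : Fin m × Fin n → ℝ :=
  fun p => M p.2 p.1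

/-- Half-vectorization of a (symmetric) matrix. -/
def vech {n : ℕ} (M : Matrix (Fin n) (Fin n) ℝ) : SymIdx n → ℝ :=
  fun p => M p.1.1 p.1.2

/-- The duplication matrix `D_n`. -/
def dup (n : ℕ) : Matrix (Fin n × Fin n) (SymIdx n) ℝ :=
  Matrix.of fun r c => if r = c.1 ∨ r = (c.1.2, c.1.1) then 1 else 0

/-- The Moore–Penrose inverse `D_n⁺ = (D_nᵀ D_n)⁻¹ D_nᵀ`. -/
noncomputable def dupPinv (n : ℕ) : Matrix (SymIdx n) (Fin n × Fin n) ℝ :=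
  ((dup n)ᵀ * dup n)⁻¹ * (dup n)ᵀ

/-- Kronecker sum `A ⊕ B = A ⊗ I + I ⊗ B`. -/
def kronSum {n m : ℕ} (A : Matrix (Fin n) (Fin n) ℝ) (B : Matrix (Fin m) (Fin m) ℝ) :
    Matrix (Fin n × Fin m) (Fin n × Fin m) ℝ :=
  A ⊗ₖ (1 : Matrix (Fin m) (Fin m) ℝ) + (1 : Matrix (Fin n) (Fin n) ℝ) ⊗ₖ B

/-- Kronecker product of two (column) vectors. -/
def kronVec {a b : ℕ} (u : Fin a → ℝ) (v : Fin b → ℝ) : Fin a × Fin b → ℝ :=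
  fun p => u p.1 * v p.2

/-- The Lyapunov operator `L_A(X) = X A + Aᵀ X`. -/
def lyap {n : ℕ} (A X : Matrix (Fin n) (Fin n) ℝ) : Matrix (Fin n) (Fin n) ℝ :=
  X * A + Aᵀ * X

/-- `w ⊗ I_n` for a column vector `w ∈ ℝⁿ`, an `n² × n` matrix. -/
def vecKronId {n : ℕ} (w : Fin n → ℝ) : Matrix (Fin n × Fin n) (Fin n) ℝ :=
  Matrix.of fun pr j => w pr.1 * (if pr.2 = j then 1 else 0)

/-- `I_n ⊗ w` for a column vector `w ∈ ℝⁿ`, an `n² × n` matrix. -/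
def idKronVec {n : ℕ} (w : Fin n → ℝ) : Matrix (Fin n × Fin n) (Fin n) ℝ :=
  Matrix.of fun pr j => (if pr.1 = j then 1 else 0) * w pr.2

/-- `Ā := D_nᵀ (A ⊕ A) (D_n⁺)ᵀ`. -/
noncomputable def kronAbar {n : ℕ} (A : Matrix (Fin n) (Fin n) ℝ) :
    Matrix (SymIdx n) (SymIdx n) ℝ :=
  (dup n)ᵀ * kronSum A A * (dupPinv n)ᵀ

/-- `P` is a permutation matrix. -/
def IsPermMatrix {s : ℕ} (P : Matrix (Fin s) (Fin s) ℝ) : Prop :=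
  ∃ σ : Equiv.Perm (Fin s), ∀ i j, P i j = if i = σ j then 1 else 0

/-- Identification of `Fin b ⊕ Fin (a - b)` with `Fin a` used for vertical stacking. -/
def stackEquiv {a b : ℕ} (h : b ≤ a) : Fin b ⊕ Fin (a - b) ≃ Fin a :=
  finSumFinEquiv.trans (finCongr (Nat.add_sub_cancel' h))



lemma sum_ind_pair {α : Type*} [Fintype α] [DecidableEq α] (u v : α) :
    ∑ r : α, (if r = u ∨ r = v then (1:ℝ) else 0) = if u = v then 1 else 2 := by
  by_cases h : u = v
  · subst h; simp
  · have key : ∀ r : α, (if r = u ∨ r = v then (1:ℝ) else 0)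
        = (if r = u then 1 else 0) + (if r = v then 1 else 0) := by
      intro r
      by_cases h1 : r = u <;> by_cases h2 : r = v <;> simp_all
    simp only [key, Finset.sum_add_distrib]
    rw [Finset.sum_ite_eq' Finset.univ u (fun _ => (1:ℝ)),
        Finset.sum_ite_eq' Finset.univ v (fun _ => (1:ℝ))]
    simp [h]
    norm_num

lemma symIdx_unique {n : ℕ} (c c' : SymIdx n) (r : Fin n × Fin n)
    (h1 : r = c.1 ∨ r = (c.1.2, c.1.1)) (h2 : r = c'.1 ∨ r = (c'.1.2, c'.1.1)) : c = c' := by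
  obtain ⟨⟨a, b⟩, hc⟩ := c
  obtain ⟨⟨a', b'⟩, hc'⟩ := c'
  apply Subtype.ext
  simp only at hc hc' ⊢
  rcases h1 with h1 | h1 <;> rcases h2 with h2 | h2 <;> subst h1 <;>
    simp only [Prod.mk.injEq, Prod.ext_iff] at h2 ⊢ <;>
    obtain ⟨e1, e2⟩ := h2 <;>
    constructor <;> omega

lemma gram_dup (n : ℕ) : (dup n)ᵀ * dup n =
    Matrix.diagonal (fun c : SymIdx n => if c.1.1 = c.1.2 then (1:ℝ) else 2) := by
  ext c c'
  simp only [Matrix.mul_apply, Matrix.transpose_apply, dup, Matrix.of_apply,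
    Matrix.diagonal_apply]
  by_cases h : c = c'
  · subst h
    have : ∀ r : Fin n × Fin n,
        (if r = c.1 ∨ r = (c.1.2, c.1.1) then (1:ℝ) else 0) *
        (if r = c.1 ∨ r = (c.1.2, c.1.1) then (1:ℝ) else 0)
        = (if r = c.1 ∨ r = (c.1.2, c.1.1) then (1:ℝ) else 0) := by
      intro r; by_cases hr : r = c.1 ∨ r = (c.1.2, c.1.1) <;> simp [hr]
    rw [Finset.sum_congr rfl (fun r _ => this r), sum_ind_pair]
    by_cases hd : (c.1).1 = (c.1).2
    · have he : (c.1 : Fin n × Fin n) = ((c.1).2, (c.1).1) := Prod.ext_iff.mpr ⟨hd, hd.symm⟩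
      rw [if_pos he, if_pos rfl, if_pos hd]
    · have he : (c.1 : Fin n × Fin n) ≠ ((c.1).2, (c.1).1) := by
        intro he; exact hd (Prod.ext_iff.mp he).1
      rw [if_neg he, if_pos rfl, if_neg hd]
  · rw [if_neg h]
    apply Finset.sum_eq_zero
    intro r _
    by_cases h1 : r = c.1 ∨ r = (c.1.2, c.1.1)
    · by_cases h2 : r = c'.1 ∨ r = (c'.1.2, c'.1.1)
      · exact absurd (symIdx_unique c c' r h1 h2) h
      · simp [h2]
    · simp [h1]

lemma gram_dup_invertible (n : ℕ) : IsUnit ((dup n)ᵀ * dup n).det := by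
  rw [gram_dup, Matrix.det_diagonal, isUnit_iff_ne_zero]
  apply Finset.prod_ne_zero_iff.mpr
  intro c _
  by_cases h : c.1.1 = c.1.2 <;> simp [h]

lemma dupPinv_mul_dup (n : ℕ) : dupPinv n * dup n = 1 := by
  rw [dupPinv, Matrix.mul_assoc]
  exact Matrix.nonsing_inv_mul _ (gram_dup_invertible n)

lemma symVec_eq_dup_mulVec {n : ℕ} (z : Fin n × Fin n → ℝ)
    (hz : ∀ i j, z (i, j) = z (j, i)) :
    (dup n).mulVec (fun c => z c.1) = z := by
  funext r
  obtain ⟨i, j⟩ := r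
  have hc₀ : ∀ (c₀ : SymIdx n), ((i, j) = c₀.1 ∨ (i, j) = (c₀.1.2, c₀.1.1)) → z c₀.1 = z (i, j) →
      (dup n).mulVec (fun c => z c.1) (i, j) = z (i, j) := by
    intro c₀ hmem hval
    rw [Matrix.mulVec, dotProduct]
    rw [Finset.sum_eq_single c₀]
    · show (if ((i, j) = c₀.1 ∨ (i, j) = ((c₀.1).2, (c₀.1).1)) then (1:ℝ) else 0) * z c₀.1
          = z (i, j)
      rw [if_pos hmem, one_mul, hval]
    · intro c _ hne
      show (if ((i, j) = c.1 ∨ (i, j) = ((c.1).2, (c.1).1)) then (1:ℝ) else 0) * z c.1 = 0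
      by_cases h1 : (i, j) = c.1 ∨ (i, j) = (c.1.2, c.1.1)
      · exact absurd (symIdx_unique c c₀ (i, j) h1 hmem) hne
      · rw [if_neg h1, zero_mul]
    · intro h; exact absurd (Finset.mem_univ _) h
  by_cases h : j ≤ i
  · exact hc₀ ⟨(i, j), h⟩ (Or.inl rfl) rfl
  · exact hc₀ ⟨(j, i), le_of_not_ge h⟩ (Or.inr rfl) (hz j i)

lemma proj_symVec {n : ℕ} (z : Fin n × Fin n → ℝ)
    (hz : ∀ i j, z (i, j) = z (j, i)) :
    ((dupPinv n)ᵀ * (dup n)ᵀ).mulVec z = z := by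
  have hsym : (dupPinv n)ᵀ * (dup n)ᵀ = dup n * dupPinv n := by
    rw [← Matrix.transpose_mul, dupPinv]
    rw [Matrix.transpose_mul, Matrix.transpose_mul, Matrix.transpose_transpose,
      Matrix.transpose_nonsing_inv, Matrix.transpose_mul, Matrix.transpose_transpose,
      Matrix.mul_assoc]
  rw [hsym, ← symVec_eq_dup_mulVec z hz, Matrix.mulVec_mulVec,
    Matrix.mul_assoc (dup n), dupPinv_mul_dup, Matrix.mul_one]

lemma perm_transpose_mul {s : ℕ} {P : Matrix (Fin s) (Fin s) ℝ}
    (h : ∃ σ : Equiv.Perm (Fin s), ∀ i j, P i j = if i = σ j then 1 else 0) :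
    Pᵀ * P = 1 := by
  obtain ⟨σ, hσ⟩ := h
  ext j j'
  simp only [Matrix.mul_apply, Matrix.transpose_apply, hσ, Matrix.one_apply, ite_mul, one_mul,
    zero_mul]
  rw [Finset.sum_ite_eq' Finset.univ (σ j) (fun i => if i = σ j' then (1:ℝ) else 0)]
  simp [σ.injective.eq_iff, eq_comm]

lemma hasDerivAt_quadVec {n m : ℕ} (C : Matrix (Fin m) (Fin n × Fin n) ℝ)
    (x : ℝ → Fin n → ℝ) (x' : Fin n → ℝ) (t : ℝ) (hx : HasDerivAt x x' t) :
    HasDerivAt (fun s => C.mulVec (kronVec (x s) (x s)))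
      (C.mulVec (fun pr => x' pr.1 * x t pr.2 + x t pr.1 * x' pr.2)) t := by
  rw [hasDerivAt_pi]
  intro j
  have hxi : ∀ i, HasDerivAt (fun s => x s i) (x' i) t := hasDerivAt_pi.mp hx
  simp only [Matrix.mulVec, dotProduct, kronVec]
  exact HasDerivAt.fun_sum fun pr _ => ((hxi pr.1).mul (hxi pr.2)).const_mul (C j pr)

lemma kronSum_mulVec_kronVec {n : ℕ} (A : Matrix (Fin n) (Fin n) ℝ) (y : Fin n → ℝ)
    (i j : Fin n) :
    (kronSum A A).mulVec (kronVec y y) (i, j)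
      = A.mulVec y i * y j + y i * A.mulVec y j := by
  simp [kronSum, kronVec, Matrix.mulVec, dotProduct, Matrix.add_apply,
    Matrix.kroneckerMap_apply, Matrix.one_apply, Fintype.sum_prod_type, add_mul, ite_mul,
    mul_ite, mul_zero, zero_mul, one_mul, mul_one, Finset.sum_add_distrib, Finset.sum_ite_eq,
    Finset.sum_ite_eq', Finset.sum_mul, Finset.mul_sum]
  congr 1 <;> exact Finset.sum_congr rfl fun l _ => by ring

lemma uTerm_mulVec {n : ℕ} (w y : Fin n → ℝ) (i j : Fin n) :
    (vecKronId w + idKronVec w).mulVec y (i, j) = w i * y j + y i * w j := by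
  simp [vecKronId, idKronVec, Matrix.mulVec, dotProduct, Matrix.add_apply,
    add_mul, ite_mul, mul_ite, mul_zero, zero_mul, one_mul, mul_one,
    Finset.sum_add_distrib, Finset.sum_ite_eq, Finset.sum_ite_eq']
  ring

lemma kronAbar_mulVec {n : ℕ} (A : Matrix (Fin n) (Fin n) ℝ) (y : Fin n → ℝ) :
    (kronAbar A).mulVec ((dup n)ᵀ.mulVec (kronVec y y))
      = (dup n)ᵀ.mulVec ((kronSum A A).mulVec (kronVec y y)) := by
  have hz : ∀ i j, kronVec y y (i, j) = kronVec y y (j, i) := fun i j => mul_comm _ _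
  calc (kronAbar A).mulVec ((dup n)ᵀ.mulVec (kronVec y y))
      = ((dup n)ᵀ * kronSum A A).mulVec
          (((dupPinv n)ᵀ * (dup n)ᵀ).mulVec (kronVec y y)) := by
        rw [Matrix.mulVec_mulVec, Matrix.mulVec_mulVec, kronAbar,
          Matrix.mul_assoc ((dup n)ᵀ * kronSum A A)]
    _ = ((dup n)ᵀ * kronSum A A).mulVec (kronVec y y) := by rw [proj_symVec _ hz]
    _ = (dup n)ᵀ.mulVec ((kronSum A A).mulVec (kronVec y y)) :=
        (Matrix.mulVec_mulVec _ _ _).symm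

lemma sum_mulVec {ι m' κ : Type*} [DecidableEq ι] [Fintype κ] (s : Finset ι)
    (f : ι → Matrix m' κ ℝ) (v : κ → ℝ) :
    (∑ i ∈ s, f i).mulVec v = ∑ i ∈ s, (f i).mulVec v := by
  induction s using Finset.induction_on with
  | empty => simp [Matrix.zero_mulVec]
  | insert a s h ih => rw [Finset.sum_insert h, Finset.sum_insert h, Matrix.add_mulVec, ih]



/-- one step of the iterative decomposition: if
`P_k L̄_k Ā = [L̄_{k+1}; Σ_{i≤k} M_i^{(k)} P_i L̄_i]`, then
`d/dt (P_k ξ_k) = Σ_{i≤k} [0; M_i^{(k)}] P_i ξ_i + [P_{k+1}ᵀ; 0] P_{k+1} ξ_{k+1}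
 + P_k L̄_k Ū x`. -/
theorem hasDerivAt_perm_xi {n p : ℕ}
    (A : Matrix (Fin n) (Fin n) ℝ) (B : Matrix (Fin n) (Fin p) ℝ)
    (u : ℝ → Fin p → ℝ) (x : ℝ → Fin n → ℝ)
    (hx : ∀ t, HasDerivAt x (A.mulVec (x t) + B.mulVec (u t)) t)
    (xsq : ℝ → SymIdx n → ℝ)
    (hxsq : ∀ t, xsq t = (dup n)ᵀ.mulVec (kronVec (x t) (x t)))
    (Ubar : ℝ → Matrix (SymIdx n) (Fin n) ℝ)
    (hUbar : ∀ t, Ubar t =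
      (dup n)ᵀ * (vecKronId (B.mulVec (u t)) + idKronVec (B.mulVec (u t))))
    (k : ℕ) (psz : ℕ → ℕ) (hple : psz (k + 1) ≤ psz k)
    (L : (i : ℕ) → Matrix (Fin (psz i)) (SymIdx n) ℝ)
    (P : (i : ℕ) → Matrix (Fin (psz i)) (Fin (psz i)) ℝ)
    (hP : ∀ i ≤ k + 1, IsPermMatrix (P i))
    (M : (i : ℕ) → Matrix (Fin (psz k - psz (k + 1))) (Fin (psz i)) ℝ)
    (hrec : P k * L k * kronAbar A =
      (Matrix.fromRows (L (k + 1))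
        (∑ i ∈ Finset.range (k + 1), M i * (P i * L i))).submatrix
        (stackEquiv hple).symm id)
    (ξ : (i : ℕ) → ℝ → Fin (psz i) → ℝ)
    (hξ : ∀ i t, ξ i t = (L i).mulVec (xsq t)) :
    ∀ t : ℝ, HasDerivAt (fun s => (P k).mulVec (ξ k s))
      ((∑ i ∈ Finset.range (k + 1),
          ((Matrix.fromRows (0 : Matrix (Fin (psz (k + 1))) (Fin (psz i)) ℝ)
              (M i)).submatrix (stackEquiv hple).symm id).mulVec
            ((P i).mulVec (ξ i t))) +
        ((Matrix.fromRows ((P (k + 1))ᵀ)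
            (0 : Matrix (Fin (psz k - psz (k + 1))) (Fin (psz (k + 1))) ℝ)).submatrix
            (stackEquiv hple).symm id).mulVec ((P (k + 1)).mulVec (ξ (k + 1) t)) +
        (P k * L k * Ubar t).mulVec (x t)) t := by
  intro t
  have hfun : (fun s => (P k).mulVec (ξ k s))
      = fun s => (P k * L k * (dup n)ᵀ).mulVec (kronVec (x s) (x s)) := by
    funext s
    rw [hξ k s, hxsq s, Matrix.mulVec_mulVec, Matrix.mulVec_mulVec]
  have key := hasDerivAt_quadVec (P k * L k * (dup n)ᵀ) x
      (A.mulVec (x t) + B.mulVec (u t)) t (hx t)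
  rw [hfun]
  convert key using 1
  have hq : (fun pr : Fin n × Fin n =>
        (A.mulVec (x t) + B.mulVec (u t)) pr.1 * x t pr.2
          + x t pr.1 * (A.mulVec (x t) + B.mulVec (u t)) pr.2)
      = (kronSum A A).mulVec (kronVec (x t) (x t))
          + (vecKronId (B.mulVec (u t)) + idKronVec (B.mulVec (u t))).mulVec (x t) := by
    funext pr
    obtain ⟨i, j⟩ := pr
    simp only [Pi.add_apply, kronSum_mulVec_kronVec, uTerm_mulVec]
    ring
  rw [hq, Matrix.mulVec_add]
  have hterm2 : (P k * L k * (dup n)ᵀ).mulVec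
      ((vecKronId (B.mulVec (u t)) + idKronVec (B.mulVec (u t))).mulVec (x t))
      = (P k * L k * Ubar t).mulVec (x t) := by
    rw [hUbar t, Matrix.mulVec_mulVec, ← Matrix.mul_assoc]
  have hterm1 : (P k * L k * (dup n)ᵀ).mulVec
      ((kronSum A A).mulVec (kronVec (x t) (x t)))
      = (P k * L k * kronAbar A).mulVec (xsq t) := by
    rw [hxsq t]
    calc (P k * L k * (dup n)ᵀ).mulVec ((kronSum A A).mulVec (kronVec (x t) (x t)))
        = (P k * L k).mulVec ((dup n)ᵀ.mulVec ((kronSum A A).mulVec (kronVec (x t) (x t)))) :=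
          (Matrix.mulVec_mulVec _ _ _).symm
      _ = (P k * L k).mulVec ((kronAbar A).mulVec ((dup n)ᵀ.mulVec (kronVec (x t) (x t)))) := by
          rw [kronAbar_mulVec]
      _ = (P k * L k * kronAbar A).mulVec ((dup n)ᵀ.mulVec (kronVec (x t) (x t))) :=
          Matrix.mulVec_mulVec _ _ _
  rw [hterm1, hterm2, hrec]
  congr 1
  have happ : ∀ {κ : Type} [Fintype κ]
      (X : Matrix (Fin (psz (k + 1)) ⊕ Fin (psz k - psz (k + 1))) κ ℝ)
      (v : κ → ℝ) (r : Fin (psz k)),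
      ((X.submatrix (stackEquiv hple).symm id).mulVec v) r
        = X.mulVec v ((stackEquiv hple).symm r) := fun X v r => rfl
  funext r
  rw [Pi.add_apply, Finset.sum_apply]
  simp only [happ, Matrix.fromRows_mulVec]
  cases hr : (stackEquiv hple).symm r with
  | inl a =>
    simp only [hr, Sum.elim_inl, Matrix.zero_mulVec, Pi.zero_apply,
      Finset.sum_const_zero, zero_add]
    rw [Matrix.mulVec_mulVec, perm_transpose_mul (hP (k + 1) le_rfl),
      Matrix.one_mulVec, hξ (k + 1) t]
  | inr b =>
    simp only [hr, Sum.elim_inr, Matrix.zero_mulVec, Pi.zero_apply, add_zero,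
      sum_mulVec, Finset.sum_apply]
    apply Finset.sum_congr rfl
    intro i _
    rw [hξ i t, Matrix.mulVec_mulVec, Matrix.mulVec_mulVec, Matrix.mul_assoc]


end Quad
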